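/- Let R > 0, ρ ∈ (0, 1), let w : [0, R] → ℝ be a nonnegative C¹ function with w' ≥ 0, and let ψ : [0, R] → ℝ be a C¹ function with ψ(s)/s → 0 as s → 0⁺. Then for every r ∈ (0, R]: w(r)ψ(r)²/r^{2+ρ} + (1+ρ)∫_0^r w(s)ψ(s)²/s^{3+ρ} ds ≤ ∫_0^r w(s)(ψ'(s))²/s^{1+ρ} ds + ∫_0^r ψ(s)² w'(s)/s^{2+ρ} ds, provided the right-hand side integrals are finite. -/

import Mathlib

open MeasureTheory Set Filter

open scoped ENNReal

lemma hardy_step (ρ r : ℝ) (W W' Ψ Ψ' : ℝ → ℝ)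
    (hWc : ContinuousOn W (Ioc 0 r)) (hPc : ContinuousOn Ψ (Ioc 0 r))
    (hW'c : ContinuousOn W' (Ioc 0 r)) (hP'c : ContinuousOn Ψ' (Ioc 0 r))
    (hWd : ∀ s ∈ Ioo 0 r, HasDerivAt W (W' s) s)
    (hPd : ∀ s ∈ Ioo 0 r, HasDerivAt Ψ (Ψ' s) s)
    (hW0 : ∀ s ∈ Ioc 0 r, 0 ≤ W s)
    (ε : ℝ) (hε : ε ∈ Ioo 0 r) :
    W r * Ψ r ^ 2 * r ^ (-(2+ρ)) - W ε * Ψ ε ^ 2 * ε ^ (-(2+ρ))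
      + (1+ρ) * ∫ s in Ioc ε r, W s * Ψ s ^ 2 * s ^ (-(3+ρ))
    ≤ ∫ s in Ioc ε r, (W s * Ψ' s ^ 2 * s ^ (-(1+ρ)) + Ψ s ^ 2 * W' s * s ^ (-(2+ρ))) := by
  have hle : ε ≤ r := hε.2.le
  have hIccsub : Icc ε r ⊆ Ioc 0 r := fun s hs => ⟨lt_of_lt_of_le hε.1 hs.1, hs.2⟩
  set F : ℝ → ℝ := fun s => W s * Ψ s ^ 2 * s ^ (-(2+ρ)) with hF
  set D : ℝ → ℝ := fun s =>
    (W' s * Ψ s ^ 2 + W s * (2 * Ψ s ^ 1 * Ψ' s)) * s ^ (-(2+ρ))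
      + W s * Ψ s ^ 2 * (-(2+ρ) * s ^ (-(2+ρ) - 1)) with hD
  set G : ℝ → ℝ := fun s => W s * Ψ s ^ 2 * s ^ (-(3+ρ)) with hG
  set A : ℝ → ℝ := fun s => W s * Ψ' s ^ 2 * s ^ (-(1+ρ)) + Ψ s ^ 2 * W' s * s ^ (-(2+ρ)) with hA
  have hrpowc : ∀ q : ℝ, ContinuousOn (fun s : ℝ => s ^ q) (Ioc 0 r) := fun q s hs =>
    (Real.continuousAt_rpow_const s q (Or.inl hs.1.ne')).continuousWithinAt
  have hFc : ContinuousOn F (Ioc 0 r) := (hWc.mul (hPc.pow 2)).mul (hrpowc _)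
  have hDc : ContinuousOn D (Ioc 0 r) := by
    apply ContinuousOn.add
    · exact ((hW'c.mul (hPc.pow 2)).add
        (hWc.mul ((continuousOn_const.mul (hPc.pow 1)).mul hP'c))).mul (hrpowc _)
    · exact (hWc.mul (hPc.pow 2)).mul (continuousOn_const.mul (hrpowc _))
  have hGc : ContinuousOn G (Ioc 0 r) := (hWc.mul (hPc.pow 2)).mul (hrpowc _)
  have hAc : ContinuousOn A (Ioc 0 r) :=
    ((hWc.mul (hP'c.pow 2)).mul (hrpowc _)).add (((hPc.pow 2).mul hW'c).mul (hrpowc _))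
  have hFd : ∀ s ∈ Ioo ε r, HasDerivWithinAt F (D s) (Ioi s) s := by
    intro s hs
    have hs' : s ∈ Ioo 0 r := ⟨hε.1.trans hs.1, hs.2⟩
    have h1 := (hWd s hs').mul ((hPd s hs').pow 2)
    have h2 := Real.hasDerivAt_rpow_const (x := s) (p := -(2+ρ)) (Or.inl hs'.1.ne')
    exact (h1.mul h2).hasDerivWithinAt
  have hDint : IntervalIntegrable D volume ε r :=
    (hDc.mono hIccsub).intervalIntegrable_of_Icc hle
  have hGint : IntervalIntegrable G volume ε r :=
    (hGc.mono hIccsub).intervalIntegrable_of_Icc hle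
  have hAint : IntervalIntegrable A volume ε r :=
    (hAc.mono hIccsub).intervalIntegrable_of_Icc hle
  have hFTC : ∫ y in ε..r, D y = F r - F ε :=
    intervalIntegral.integral_eq_sub_of_hasDeriv_right_of_le hle (hFc.mono hIccsub) hFd hDint
  have hpt : ∀ s ∈ Icc ε r, D s + (1+ρ) * G s ≤ A s := by
    intro s hs
    have hs' := hIccsub hs
    have hs0 : (0:ℝ) < s := hs'.1
    have hW := hW0 s hs'
    have e1 : s ^ (-(2+ρ)) = s ^ (-(1+ρ)) * s⁻¹ := by
      have h : -(2+ρ) = -(1+ρ) + (-1) := by ring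
      rw [h, Real.rpow_add hs0, Real.rpow_neg_one]
    have e2 : s ^ (-(3+ρ)) = s ^ (-(1+ρ)) * s⁻¹ * s⁻¹ := by
      have h : -(3+ρ) = -(1+ρ) + (-1) + (-1) := by ring
      rw [h, Real.rpow_add hs0, Real.rpow_add hs0, Real.rpow_neg_one]
    have e3 : s ^ (-(2+ρ) - 1) = s ^ (-(1+ρ)) * s⁻¹ * s⁻¹ := by
      have h : -(2+ρ) - 1 = -(1+ρ) + (-1) + (-1) := by ring
      rw [h, Real.rpow_add hs0, Real.rpow_add hs0, Real.rpow_neg_one]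
    have hkey : 0 ≤ W s * s ^ (-(1+ρ)) * (Ψ' s - Ψ s * s⁻¹) ^ 2 :=
      mul_nonneg (mul_nonneg hW (Real.rpow_nonneg hs0.le _)) (sq_nonneg _)
    simp only [hD, hG, hA, e1, e2, e3]
    nlinarith [hkey]
  have hmono : ∫ s in ε..r, (D s + (1+ρ) * G s) ≤ ∫ s in ε..r, A s :=
    intervalIntegral.integral_mono_on hle (hDint.add (hGint.const_mul _)) hAint hpt
  have hsplit : ∫ s in ε..r, (D s + (1+ρ) * G s)
      = (F r - F ε) + (1+ρ) * ∫ s in ε..r, G s := by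
    rw [intervalIntegral.integral_add hDint (hGint.const_mul _), hFTC,
      intervalIntegral.integral_const_mul]
  rw [intervalIntegral.integral_of_le hle] at hmono hsplit
  rw [intervalIntegral.integral_of_le hle] at hmono hsplit
  rw [hsplit] at hmono
  exact hmono

set_option maxHeartbeats 1000000 in
/-- Improved (ρ-weighted) Hardy inequality at the center of symmetry. -/
theorem stmt_4 (R ρ : ℝ) (hR : 0 < R) (hρ : 0 < ρ) (hρ1 : ρ < 1) (w w' ψ ψ' : ℝ → ℝ)
    (hw : ∀ s ∈ Icc 0 R, 0 ≤ w s)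
    (hw' : ∀ s ∈ Icc 0 R, 0 ≤ w' s)
    (hwd : ∀ s ∈ Icc 0 R, HasDerivWithinAt w (w' s) (Icc 0 R) s)
    (hwc : ContinuousOn w' (Icc 0 R))
    (hψd : ∀ s ∈ Icc 0 R, HasDerivWithinAt ψ (ψ' s) (Icc 0 R) s)
    (hψc : ContinuousOn ψ' (Icc 0 R))
    (h0 : Tendsto (fun s => ψ s / s) (nhdsWithin 0 (Ioi 0)) (nhds 0))
    (r : ℝ) (hr : r ∈ Ioc 0 R)
    (hint1 : IntegrableOn (fun s => w s * ψ' s ^ 2 / s ^ (1 + ρ)) (Ioc 0 r))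
    (hint2 : IntegrableOn (fun s => ψ s ^ 2 * w' s / s ^ (2 + ρ)) (Ioc 0 r)) :
    ENNReal.ofReal (w r * ψ r ^ 2 / r ^ (2 + ρ)) +
        ENNReal.ofReal (1 + ρ) *
          ∫⁻ s in Ioc 0 r, ENNReal.ofReal (w s * ψ s ^ 2 / s ^ (3 + ρ)) ≤
      ENNReal.ofReal ((∫ s in Ioc 0 r, w s * ψ' s ^ 2 / s ^ (1 + ρ)) +
        ∫ s in Ioc 0 r, ψ s ^ 2 * w' s / s ^ (2 + ρ)) := by
  obtain ⟨hr0, hrR⟩ := hr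
  -- clamping projection onto [0, R]
  set π : ℝ → ℝ := fun s => min (max s 0) R with hπdef
  have hπcont : Continuous π := (continuous_id.max continuous_const).min continuous_const
  have hπmem : ∀ s, π s ∈ Icc 0 R := fun s =>
    ⟨le_min (le_max_right _ _) hR.le, min_le_right _ _⟩
  have hπeq : ∀ s ∈ Icc 0 R, π s = s := by
    intro s hs
    simp only [hπdef, max_eq_left hs.1, min_eq_left hs.2]
  set W : ℝ → ℝ := fun s => w (π s) with hWdef
  set W' : ℝ → ℝ := fun s => w' (π s) with hW'def
  set Ψ : ℝ → ℝ := fun s => ψ (π s) with hΨdef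
  set Ψ' : ℝ → ℝ := fun s => ψ' (π s) with hΨ'def
  have hwcont : ContinuousOn w (Icc 0 R) := fun s hs => (hwd s hs).continuousWithinAt
  have hψcont : ContinuousOn ψ (Icc 0 R) := fun s hs => (hψd s hs).continuousWithinAt
  have hWcont : Continuous W := hwcont.comp_continuous hπcont hπmem
  have hΨcont : Continuous Ψ := hψcont.comp_continuous hπcont hπmem
  have hW'cont : Continuous W' := hwc.comp_continuous hπcont hπmem
  have hΨ'cont : Continuous Ψ' := hψc.comp_continuous hπcont hπmem
  have hWw : ∀ s ∈ Icc 0 R, W s = w s := fun s hs => by simp only [hWdef, hπeq s hs]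
  have hW'w : ∀ s ∈ Icc 0 R, W' s = w' s := fun s hs => by simp only [hW'def, hπeq s hs]
  have hΨψ : ∀ s ∈ Icc 0 R, Ψ s = ψ s := fun s hs => by simp only [hΨdef, hπeq s hs]
  have hΨ'ψ : ∀ s ∈ Icc 0 R, Ψ' s = ψ' s := fun s hs => by simp only [hΨ'def, hπeq s hs]
  have hsubIccR : Ioc 0 r ⊆ Icc 0 R := fun s hs => ⟨hs.1.le, hs.2.trans hrR⟩
  have hsubIoo : Ioo 0 r ⊆ Ioo 0 R := fun s hs => ⟨hs.1, hs.2.trans_le hrR⟩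
  -- derivatives of the clamped functions at interior points
  have hWd : ∀ s ∈ Ioo 0 R, HasDerivAt W (W' s) s := by
    intro s hs
    have hs' : s ∈ Icc 0 R := Ioo_subset_Icc_self hs
    have h1 : HasDerivAt w (w' s) s := (hwd s hs').hasDerivAt (Icc_mem_nhds hs.1 hs.2)
    have heq : W =ᶠ[nhds s] w := by
      filter_upwards [Ioo_mem_nhds hs.1 hs.2] with t ht
      simp only [hWdef, hπeq t (Ioo_subset_Icc_self ht)]
    rw [hW'w s hs']
    exact h1.congr_of_eventuallyEq heq
  have hΨd : ∀ s ∈ Ioo 0 R, HasDerivAt Ψ (Ψ' s) s := by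
    intro s hs
    have hs' : s ∈ Icc 0 R := Ioo_subset_Icc_self hs
    have h1 : HasDerivAt ψ (ψ' s) s := (hψd s hs').hasDerivAt (Icc_mem_nhds hs.1 hs.2)
    have heq : Ψ =ᶠ[nhds s] ψ := by
      filter_upwards [Ioo_mem_nhds hs.1 hs.2] with t ht
      simp only [hΨdef, hπeq t (Ioo_subset_Icc_self ht)]
    rw [hΨ'ψ s hs']
    exact h1.congr_of_eventuallyEq heq
  -- abbreviations
  set F : ℝ → ℝ := fun s => W s * Ψ s ^ 2 * s ^ (-(2+ρ)) with hFdef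
  set G : ℝ → ℝ := fun s => W s * Ψ s ^ 2 * s ^ (-(3+ρ)) with hGdef
  set C : ℝ := (∫ s in Ioc 0 r, w s * ψ' s ^ 2 / s ^ (1 + ρ)) +
      ∫ s in Ioc 0 r, ψ s ^ 2 * w' s / s ^ (2 + ρ) with hCdef
  set Hreal : ℝ → ℝ := fun ε => ∫ s in Ioc ε r, G s with hHdef
  have h1ρ : (0:ℝ) < 1 + ρ := by linarith
  have hW0 : ∀ s ∈ Ioc 0 r, 0 ≤ W s := fun s hs => by
    rw [hWw s (hsubIccR hs)]; exact hw s (hsubIccR hs)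
  have hG0 : ∀ s ∈ Ioc 0 r, 0 ≤ G s := fun s hs =>
    mul_nonneg (mul_nonneg (hW0 s hs) (sq_nonneg _)) (Real.rpow_nonneg hs.1.le _)
  have hGc : ContinuousOn G (Ioc 0 r) := by
    apply (hWcont.continuousOn.mul ((hΨcont.pow 2).continuousOn)).mul
    exact fun s hs => (Real.continuousAt_rpow_const s _ (Or.inl hs.1.ne')).continuousWithinAt
  have hGm : Measurable G := by
    exact ((hWcont.mul (hΨcont.pow 2)).measurable).mul (measurable_id.pow_const _)
  -- the key per-ε inequality
  have key : ∀ ε ∈ Ioo 0 r, F r + (1+ρ) * Hreal ε ≤ F ε + C := by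
    intro ε hε
    have step : F r - F ε + (1+ρ) * Hreal ε
        ≤ ∫ s in Ioc ε r, (W s * Ψ' s ^ 2 * s ^ (-(1+ρ)) + Ψ s ^ 2 * W' s * s ^ (-(2+ρ))) :=
      hardy_step ρ r W W' Ψ Ψ' hWcont.continuousOn hΨcont.continuousOn
        hW'cont.continuousOn hΨ'cont.continuousOn
        (fun s hs => hWd s (hsubIoo hs)) (fun s hs => hΨd s (hsubIoo hs)) hW0 ε hε
    have hsub' : Ioc ε r ⊆ Ioc 0 r := Ioc_subset_Ioc_left hε.1.le
    have heqA : ∀ s ∈ Ioc ε r,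
        W s * Ψ' s ^ 2 * s ^ (-(1+ρ)) + Ψ s ^ 2 * W' s * s ^ (-(2+ρ))
          = w s * ψ' s ^ 2 / s ^ (1 + ρ) + ψ s ^ 2 * w' s / s ^ (2 + ρ) := by
      intro s hs
      have hs0 := hsub' hs
      have hs' := hsubIccR hs0
      rw [hWw s hs', hW'w s hs', hΨψ s hs', hΨ'ψ s hs',
        Real.rpow_neg hs0.1.le, Real.rpow_neg hs0.1.le, div_eq_mul_inv, div_eq_mul_inv]
    have h2 : ∫ s in Ioc ε r, (W s * Ψ' s ^ 2 * s ^ (-(1+ρ)) + Ψ s ^ 2 * W' s * s ^ (-(2+ρ)))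
        = ∫ s in Ioc ε r, (w s * ψ' s ^ 2 / s ^ (1 + ρ) + ψ s ^ 2 * w' s / s ^ (2 + ρ)) :=
      setIntegral_congr_fun measurableSet_Ioc fun s hs => heqA s hs
    have h3 : ∫ s in Ioc ε r, (w s * ψ' s ^ 2 / s ^ (1 + ρ) + ψ s ^ 2 * w' s / s ^ (2 + ρ))
        ≤ ∫ s in Ioc 0 r, (w s * ψ' s ^ 2 / s ^ (1 + ρ) + ψ s ^ 2 * w' s / s ^ (2 + ρ)) := by
      apply setIntegral_mono_set (hint1.add hint2)
      · rw [EventuallyLE, ae_restrict_iff' measurableSet_Ioc]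
        refine Eventually.of_forall fun s hs => ?_
        have hs' := hsubIccR hs
        exact add_nonneg
          (div_nonneg (mul_nonneg (hw s hs') (sq_nonneg _)) (Real.rpow_nonneg hs.1.le _))
          (div_nonneg (mul_nonneg (sq_nonneg _) (hw' s hs')) (Real.rpow_nonneg hs.1.le _))
      · exact HasSubset.Subset.eventuallyLE hsub'
    have h4 : ∫ s in Ioc 0 r, (w s * ψ' s ^ 2 / s ^ (1 + ρ) + ψ s ^ 2 * w' s / s ^ (2 + ρ)) = C := by
      rw [hCdef]; exact integral_add hint1 hint2
    linarith [step, h2 ▸ (h3.trans_eq h4)]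
  have hrIcc : r ∈ Icc 0 R := ⟨hr0.le, hrR⟩
  have hFrval : w r * ψ r ^ 2 / r ^ (2 + ρ) = F r := by
    show _ = W r * Ψ r ^ 2 * r ^ (-(2+ρ))
    rw [hWw r hrIcc, hΨψ r hrIcc, Real.rpow_neg hr0.le, div_eq_mul_inv]
  have hTval : ∫⁻ s in Ioc 0 r, ENNReal.ofReal (w s * ψ s ^ 2 / s ^ (3 + ρ))
      = ∫⁻ s in Ioc 0 r, ENNReal.ofReal (G s) := by
    apply setLIntegral_congr_fun_ae measurableSet_Ioc
    refine Eventually.of_forall fun s hs => ?_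
    have hs' := hsubIccR hs
    congr 1
    show _ = W s * Ψ s ^ 2 * s ^ (-(3+ρ))
    rw [hWw s hs', hΨψ s hs', Real.rpow_neg hs.1.le, div_eq_mul_inv]
  have hC0 : 0 ≤ C := by
    rw [hCdef]
    apply add_nonneg
    · exact setIntegral_nonneg measurableSet_Ioc fun s hs =>
        div_nonneg (mul_nonneg (hw s (hsubIccR hs)) (sq_nonneg _)) (Real.rpow_nonneg hs.1.le _)
    · exact setIntegral_nonneg measurableSet_Ioc fun s hs =>
        div_nonneg (mul_nonneg (sq_nonneg _) (hw' s (hsubIccR hs))) (Real.rpow_nonneg hs.1.le _)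
  have hFr0 : 0 ≤ F r :=
    mul_nonneg (mul_nonneg (hW0 r (right_mem_Ioc.mpr hr0)) (sq_nonneg _))
      (Real.rpow_nonneg hr0.le _)
  have hH0 : ∀ ε ∈ Ioc 0 r, 0 ≤ Hreal ε := fun ε hε =>
    setIntegral_nonneg measurableSet_Ioc fun s hs => hG0 s ⟨lt_trans hε.1 hs.1, hs.2⟩
  rw [hFrval, hTval]
  set T : ℝ≥0∞ := ∫⁻ s in Ioc 0 r, ENNReal.ofReal (G s) with hTdef
  set ν : Measure ℝ := volume.withDensity (fun s => ENNReal.ofReal (G s)) with hνdef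
  have hνapp : ∀ a b : ℝ, ν (Ioc a b) = ∫⁻ s in Ioc a b, ENNReal.ofReal (G s) :=
    fun a b => withDensity_apply _ measurableSet_Ioc
  have hGiOn : ∀ ε ∈ Ioc 0 r, IntegrableOn G (Ioc ε r) := by
    intro ε hε
    have hss : Icc ε r ⊆ Ioc 0 r := fun s hs => ⟨lt_of_lt_of_le hε.1 hs.1, hs.2⟩
    exact ((hGc.mono hss).integrableOn_Icc).mono_set Ioc_subset_Icc_self
  have hνIoc : ∀ ε ∈ Ioc 0 r, ν (Ioc ε r) = ENNReal.ofReal (Hreal ε) := by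
    intro ε hε
    rw [hνapp]
    refine (ofReal_integral_eq_lintegral_ofReal (hGiOn ε hε) ?_).symm
    rw [EventuallyLE, ae_restrict_iff' measurableSet_Ioc]
    exact Eventually.of_forall fun s hs => hG0 s ⟨lt_trans hε.1 hs.1, hs.2⟩
  rcases eq_or_ne T ⊤ with hT | hT
  · -- infinite case: derive a contradiction
    exfalso
    -- w is monotone up to r
    have hwmono : ∀ s ∈ Icc 0 r, w s ≤ w r := by
      intro s hs
      have hsle : s ≤ r := hs.2
      have hIccsub2 : Icc s r ⊆ Icc 0 R := fun u hu => ⟨hs.1.trans hu.1, hu.2.trans hrR⟩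
      have hderiv : ∀ x ∈ Ioo s r, HasDerivWithinAt w (w' x) (Ioi x) x := by
        intro x hx
        have hx' : x ∈ Ioo 0 R := ⟨lt_of_le_of_lt hs.1 hx.1, lt_of_lt_of_le hx.2 hrR⟩
        exact ((hwd x (Ioo_subset_Icc_self hx')).hasDerivAt
          (Icc_mem_nhds hx'.1 hx'.2)).hasDerivWithinAt
      have hFTC := intervalIntegral.integral_eq_sub_of_hasDeriv_right_of_le hsle
        (hwcont.mono hIccsub2) hderiv ((hwc.mono hIccsub2).intervalIntegrable_of_Icc hsle)
      have hnn : 0 ≤ ∫ u in s..r, w' u := intervalIntegral.integral_nonneg hsle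
        fun u hu => hw' u (hIccsub2 hu)
      rw [hFTC] at hnn
      linarith
    have hMpos : 0 < w r := by
      rcases lt_or_ge 0 (w r) with h | h
      · exact h
      · exfalso
        have hzero : ∀ s ∈ Ioc 0 r, G s = 0 := by
          intro s hs
          have hws : w s = 0 :=
            le_antisymm (le_trans (hwmono s ⟨hs.1.le, hs.2⟩) h) (hw s (hsubIccR hs))
          show W s * Ψ s ^ 2 * s ^ (-(3+ρ)) = 0
          rw [hWw s (hsubIccR hs), hws]; ring
        have hT0 : T = 0 := by
          rw [hTdef, setLIntegral_congr_fun_ae measurableSet_Ioc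
            (Eventually.of_forall fun s hs => by rw [hzero s hs, ENNReal.ofReal_zero])]
          simp
        exact ENNReal.zero_ne_top (hT0.symm.trans hT)
    -- Hreal is unbounded as ε → 0
    have hν_union : ν (Ioc 0 r) = ⨆ n : ℕ, ν (Ioc (r / (n+2)) r) := by
      have hmono : Monotone fun n : ℕ => Ioc (r / (n+2)) r := by
        intro m n hmn
        apply Ioc_subset_Ioc_left
        apply div_le_div_of_nonneg_left hr0.le (by positivity)
        have : (m:ℝ) ≤ n := by exact_mod_cast hmn
        linarith
      have hcup : ⋃ n : ℕ, Ioc (r / (n+2)) r = Ioc 0 r := by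
        ext s
        simp only [mem_iUnion, mem_Ioc]
        constructor
        · rintro ⟨n, h1, h2⟩
          exact ⟨lt_trans (div_pos hr0 (by positivity)) h1, h2⟩
        · rintro ⟨h1, h2⟩
          obtain ⟨n, hn⟩ := exists_nat_gt (r / s)
          refine ⟨n, ?_, h2⟩
          rw [div_lt_iff₀ (by positivity)]
          rw [div_lt_iff₀ h1] at hn
          nlinarith
      rw [← hcup, hmono.directed_le.measure_iUnion]
    have hunb : ∀ B : ℝ, ∃ ε ∈ Ioo (0:ℝ) r, B ≤ Hreal ε := by
      intro B
      by_contra hB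
      push_neg at hB
      have hbd : ∀ n : ℕ, ν (Ioc (r / (n+2)) r) ≤ ENNReal.ofReal B := by
        intro n
        have hεmem : r / (n+2) ∈ Ioo (0:ℝ) r := by
          constructor
          · positivity
          · rw [div_lt_iff₀ (by positivity)]; nlinarith
        rw [hνIoc _ ⟨hεmem.1, hεmem.2.le⟩]
        exact ENNReal.ofReal_le_ofReal (hB _ hεmem).le
      have hle : ν (Ioc 0 r) ≤ ENNReal.ofReal B := by
        rw [hν_union]; exact iSup_le hbd
      rw [hνapp 0 r, ← hTdef, hT] at hle
      exact absurd (top_le_iff.mp hle) ENNReal.ofReal_ne_top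
    set Cρ : ℝ := C / (1+ρ) with hCρdef
    have hCρ : (1+ρ) * Cρ = C := by rw [hCρdef]; field_simp
    obtain ⟨ε₀, hε₀, hHε₀⟩ := hunb (Cρ + 1/(1+ρ))
    set κ : ℝ := ε₀ ^ (1+ρ) * (Hreal ε₀ - Cρ) with hκdef
    have hκpos : 0 < κ := by
      apply mul_pos (Real.rpow_pos_of_pos hε₀.1 _)
      have : 0 < 1/(1+ρ) := by positivity
      linarith
    set Hfun : ℝ → ℝ := fun u => ∫ t in u..r, G t with hHfdef
    have hHfeq : ∀ ε ∈ Ioc (0:ℝ) r, Hfun ε = Hreal ε := fun ε hε =>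
      intervalIntegral.integral_of_le hε.2
    have hHd : ∀ s ∈ Ioo (0:ℝ) r, HasDerivAt Hfun (-G s) s := by
      intro s hs
      apply intervalIntegral.integral_hasDerivAt_left
      · have hss : Icc s r ⊆ Ioc 0 r := fun u hu => ⟨lt_of_lt_of_le hs.1 hu.1, hu.2⟩
        exact (hGc.mono hss).intervalIntegrable_of_Icc hs.2.le
      · exact hGm.stronglyMeasurable.stronglyMeasurableAtFilter
      · exact ((hWcont.continuousAt).mul ((hΨcont.continuousAt).pow 2)).mul
          (Real.continuousAt_rpow_const s _ (Or.inl hs.1.ne'))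
    set K : ℝ → ℝ := fun u => u ^ (1+ρ) * (Hfun u - Cρ) with hKdef
    set K' : ℝ → ℝ := fun s =>
      (1+ρ) * s ^ (1+ρ-1) * (Hfun s - Cρ) + s ^ (1+ρ) * (-G s) with hK'def
    have hKd : ∀ s ∈ Ioo (0:ℝ) r, HasDerivAt K (K' s) s := by
      intro s hs
      exact (Real.hasDerivAt_rpow_const (Or.inl hs.1.ne')).mul ((hHd s hs).sub_const _)
    have hK'le : ∀ s ∈ Ioo (0:ℝ) r, K' s ≤ 0 := by
      intro s hs
      have hs0 : (0:ℝ) < s := hs.1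
      have e1 : s ^ (1+ρ-1) = s ^ ρ := by rw [show (1+ρ-1 : ℝ) = ρ by ring]
      have e2 : s ^ (1+ρ) * G s = s ^ ρ * F s := by
        show s ^ (1+ρ) * (W s * Ψ s ^ 2 * s ^ (-(3+ρ)))
          = s ^ ρ * (W s * Ψ s ^ 2 * s ^ (-(2+ρ)))
        have hpow : s ^ (1+ρ) * s ^ (-(3+ρ)) = s ^ ρ * s ^ (-(2+ρ)) := by
          rw [← Real.rpow_add hs0, ← Real.rpow_add hs0]
          congr 1
          ring
        linear_combination (W s * Ψ s ^ 2) * hpow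
      have hH : Hfun s = Hreal s := hHfeq s ⟨hs.1, hs.2.le⟩
      have hsρ : (0:ℝ) ≤ s ^ ρ := Real.rpow_nonneg hs0.le _
      have hform : K' s = s ^ ρ * ((1+ρ) * Hreal s - C - F s) := by
        show (1+ρ) * s ^ (1+ρ-1) * (Hfun s - Cρ) + s ^ (1+ρ) * (-G s) = _
        rw [e1, hH]
        linear_combination (-1 : ℝ) * e2 - s ^ ρ * hCρ
      rw [hform]
      have hkey := key s hs
      have h7 : (1+ρ) * Hreal s - C - F s ≤ 0 := by linarith [hFr0]
      exact mul_nonpos_of_nonneg_of_nonpos hsρ h7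
    have hKε₀ : K ε₀ = κ := by
      show ε₀ ^ (1+ρ) * (Hfun ε₀ - Cρ) = κ
      rw [hHfeq ε₀ ⟨hε₀.1, hε₀.2.le⟩, hκdef]
    have hKmono : ∀ ε ∈ Ioo (0:ℝ) ε₀, K ε₀ ≤ K ε := by
      intro ε hε
      have hsub : Icc ε ε₀ ⊆ Ioo (0:ℝ) r :=
        fun u hu => ⟨lt_of_lt_of_le hε.1 hu.1, lt_of_le_of_lt hu.2 hε₀.2⟩
      have hcont : ContinuousOn K (Icc ε ε₀) :=
        fun u hu => ((hKd u (hsub hu)).continuousAt).continuousWithinAt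
      have hanti : AntitoneOn K (Icc ε ε₀) := by
        apply antitoneOn_of_deriv_nonpos (convex_Icc ε ε₀) hcont
        · intro u hu
          rw [interior_Icc] at hu
          exact ((hKd u (hsub (Ioo_subset_Icc_self hu))).differentiableAt).differentiableWithinAt
        · intro u hu
          rw [interior_Icc] at hu
          rw [(hKd u (hsub (Ioo_subset_Icc_self hu))).deriv]
          exact hK'le u (hsub (Ioo_subset_Icc_self hu))
      exact hanti (left_mem_Icc.mpr hε.2.le) (right_mem_Icc.mpr hε.2.le) hε.2.le
    have hlow : ∀ ε ∈ Ioo (0:ℝ) ε₀, (1+ρ) * κ * ε ^ (-(1+ρ)) ≤ F ε := by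
      intro ε hε
      have hε0 : (0:ℝ) < ε := hε.1
      have hεr : ε ∈ Ioo (0:ℝ) r := ⟨hε.1, hε.2.trans hε₀.2⟩
      have h1 : κ ≤ ε ^ (1+ρ) * (Hfun ε - Cρ) := by
        have := hKmono ε hε
        rw [hKε₀] at this
        exact this
      have hpow : (0:ℝ) < ε ^ (1+ρ) := Real.rpow_pos_of_pos hε0 _
      have h2 : κ * ε ^ (-(1+ρ)) ≤ Hfun ε - Cρ := by
        rw [Real.rpow_neg hε0.le, ← div_eq_mul_inv]
        rw [div_le_iff₀ hpow]
        nlinarith [h1]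
      have hH : Hfun ε = Hreal ε := hHfeq ε ⟨hε0, hεr.2.le⟩
      have hkey := key ε hεr
      -- F ε ≥ (1+ρ) * (Hreal ε - Cρ) ≥ (1+ρ) * κ * ε^(-(1+ρ))
      have h3 : (1+ρ) * (Hreal ε - Cρ) ≤ F ε := by nlinarith [hFr0, hCρ]
      rw [hH] at h2
      nlinarith [h2, h3, h1ρ]
    have hupper : ∀ ε ∈ Ioo (0:ℝ) ε₀, F ε ≤ w r * (ψ ε / ε) ^ 2 * ε ^ (-ρ) := by
      intro ε hε
      have hε0 : (0:ℝ) < ε := hε.1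
      have hεr : ε < r := hε.2.trans hε₀.2
      have hεIcc : ε ∈ Icc (0:ℝ) R := ⟨hε0.le, hεr.le.trans hrR⟩
      have e : ε ^ (-(2+ρ)) = (ε^2)⁻¹ * ε ^ (-ρ) := by
        rw [show -(2+ρ) = (-((2:ℕ):ℝ)) + (-ρ) by push_cast; ring, Real.rpow_add hε0,
          Real.rpow_neg hε0.le, Real.rpow_natCast]
      have hF : F ε = w ε * ψ ε ^ 2 * ((ε^2)⁻¹ * ε ^ (-ρ)) := by
        show W ε * Ψ ε ^ 2 * ε ^ (-(2+ρ)) = _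
        rw [hWw ε hεIcc, hΨψ ε hεIcc, e]
      rw [hF, div_pow]
      have hwle := hwmono ε ⟨hε0.le, hεr.le⟩
      have hnn : (0:ℝ) ≤ ψ ε ^ 2 * ((ε^2)⁻¹ * ε ^ (-ρ)) := by positivity
      have heq2 : w r * (ψ ε ^ 2 / ε ^ 2) * ε ^ (-ρ)
          = w r * (ψ ε ^ 2 * ((ε^2)⁻¹ * ε ^ (-ρ))) := by
        rw [div_eq_mul_inv]; ring
      rw [heq2]
      nlinarith [hnn, hwle]
    set c₀ : ℝ := (1+ρ) * κ / ε₀ with hc₀def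
    have hc₀pos : 0 < c₀ := div_pos (mul_pos h1ρ hκpos) hε₀.1
    have htend : Tendsto (fun s => w r * (ψ s / s) ^ 2) (nhdsWithin 0 (Ioi 0)) (nhds 0) := by
      have h2 := (h0.mul h0).const_mul (w r)
      have : (fun s => w r * (ψ s / s * (ψ s / s))) = fun s => w r * (ψ s / s) ^ 2 := by
        funext s; ring
      rw [this] at h2
      simpa using h2
    have hev := htend.eventually_lt_const hc₀pos
    have hmem : Ioo (0:ℝ) ε₀ ∈ nhdsWithin 0 (Ioi 0) :=
      Ioo_mem_nhdsGT_of_mem (left_mem_Ico.mpr hε₀.1)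
    have hmemev : ∀ᶠ s in nhdsWithin (0:ℝ) (Ioi 0), s ∈ Ioo (0:ℝ) ε₀ :=
      eventually_of_mem hmem fun x hx => hx
    obtain ⟨ε, hεlt, hεI⟩ := (hev.and hmemev).exists
    have hlo := hlow ε hεI
    have hup := hupper ε hεI
    have hε0 : (0:ℝ) < ε := hεI.1
    have hsplit2 : ε ^ (-(1+ρ)) = ε⁻¹ * ε ^ (-ρ) := by
      rw [show -(1+ρ) = (-1) + (-ρ) by ring, Real.rpow_add hε0, Real.rpow_neg_one]
    have hρpow : (0:ℝ) < ε ^ (-ρ) := Real.rpow_pos_of_pos hε0 _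
    have h5 : (1+ρ) * κ * ε⁻¹ ≤ w r * (ψ ε / ε) ^ 2 := by
      rw [hsplit2] at hlo
      have hchain := hlo.trans hup
      have h5' : ((1+ρ) * κ * ε⁻¹) * ε ^ (-ρ) ≤ (w r * (ψ ε / ε) ^ 2) * ε ^ (-ρ) := by
        nlinarith [hchain]
      exact le_of_mul_le_mul_right h5' hρpow
    have h6 : c₀ ≤ (1+ρ) * κ * ε⁻¹ := by
      rw [hc₀def, div_eq_mul_inv]
      have hinv : ε₀⁻¹ ≤ ε⁻¹ := inv_anti₀ hε0 hεI.2.le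
      nlinarith [mul_pos h1ρ hκpos]
    linarith [hεlt]
  · -- finite case
    have claim_small : ∀ δ : ℝ, 0 < δ → ∀ c : ℝ, 0 < c →
        ∃ ε ∈ Ioo (0:ℝ) (min δ r), F ε < c := by
      intro δ hδ c hc
      by_contra hcon
      push_neg at hcon
      set δ' : ℝ := min δ r with hδ'def
      have hδ'0 : 0 < δ' := lt_min hδ hr0
      have hδ'r : δ' ≤ r := min_le_right _ _
      have hGlb : ∀ s ∈ Ioc (0:ℝ) (δ'/2), ENNReal.ofReal (c * s⁻¹) ≤ ENNReal.ofReal (G s) := by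
        intro s hs
        apply ENNReal.ofReal_le_ofReal
        have hs0 : (0:ℝ) < s := hs.1
        have hsδ : s ∈ Ioo (0:ℝ) δ' := ⟨hs.1, lt_of_le_of_lt hs.2 (by linarith)⟩
        have hcF := hcon s hsδ
        have e : G s = F s * s⁻¹ := by
          show W s * Ψ s ^ 2 * s ^ (-(3+ρ)) = (W s * Ψ s ^ 2 * s ^ (-(2+ρ))) * s⁻¹
          rw [show -(3+ρ) = -(2+ρ) + (-1) by ring, Real.rpow_add hs0, Real.rpow_neg_one]
          ring
        rw [e]
        have hi : (0:ℝ) ≤ s⁻¹ := by positivity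
        nlinarith
      have hbig : ∀ x : ℝ, 0 ≤ x → ENNReal.ofReal x ≤ T := by
        intro x hx
        set a : ℝ := (δ'/2) * Real.exp (-(x/c)) with hadef
        have ha0 : 0 < a := by positivity
        have haδ : a ≤ δ'/2 := by
          rw [hadef]
          apply mul_le_of_le_one_right (by positivity)
          exact Real.exp_le_one_iff.mpr (neg_nonpos.mpr (div_nonneg hx hc.le))
        have hsub : Ioc a (δ'/2) ⊆ Ioc 0 r := fun s hs =>
          ⟨lt_trans ha0 hs.1, hs.2.trans (by linarith)⟩
        have hcint : ContinuousOn (fun s : ℝ => c * s⁻¹) (Icc a (δ'/2)) := by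
          apply continuousOn_const.mul
          apply ContinuousOn.inv₀ continuousOn_id
          exact fun s hs => (lt_of_lt_of_le ha0 hs.1).ne'
        have hint : IntegrableOn (fun s => c * s⁻¹) (Ioc a (δ'/2)) :=
          hcint.integrableOn_Icc.mono_set Ioc_subset_Icc_self
        have hcalc : ∫ s in Ioc a (δ'/2), c * s⁻¹ = x := by
          rw [← intervalIntegral.integral_of_le haδ,
            intervalIntegral.integral_const_mul, integral_inv]
          · have hda : (δ'/2) / a = Real.exp (x/c) := by
              rw [hadef, Real.exp_neg]
              field_simp
            rw [hda, Real.log_exp, mul_div_cancel₀ _ hc.ne']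
          · intro hmem0
            rw [uIcc_of_le haδ] at hmem0
            exact absurd hmem0.1 (not_le.mpr ha0)
        calc ENNReal.ofReal x = ENNReal.ofReal (∫ s in Ioc a (δ'/2), c * s⁻¹) := by rw [hcalc]
          _ = ∫⁻ s in Ioc a (δ'/2), ENNReal.ofReal (c * s⁻¹) := by
              apply ofReal_integral_eq_lintegral_ofReal hint
              rw [EventuallyLE, ae_restrict_iff' measurableSet_Ioc]
              exact Eventually.of_forall fun s hs =>
                mul_nonneg hc.le (inv_nonneg.mpr (ha0.le.trans hs.1.le))
          _ ≤ ∫⁻ s in Ioc a (δ'/2), ENNReal.ofReal (G s) :=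
              setLIntegral_mono (ENNReal.measurable_ofReal.comp hGm)
                (fun s hs => hGlb s ⟨lt_trans ha0 hs.1, hs.2⟩)
          _ ≤ T := lintegral_mono_set hsub
      have h1 := hbig (T.toReal + 1) (by positivity)
      have hTeq : ENNReal.ofReal T.toReal = T := ENNReal.ofReal_toReal hT
      have h2 : ENNReal.ofReal T.toReal < ENNReal.ofReal (T.toReal + 1) :=
        (ENNReal.ofReal_lt_ofReal_iff (by positivity)).mpr (lt_add_one _)
      rw [hTeq] at h2
      exact absurd (h2.trans_le h1) (lt_irrefl _)
    have Sδ : ∀ δ ∈ Ioo (0:ℝ) r,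
        ENNReal.ofReal (F r) + ENNReal.ofReal (1+ρ) * ν (Ioc δ r) ≤ ENNReal.ofReal C := by
      intro δ hδ
      apply ENNReal.le_of_forall_pos_le_add
      intro η hη _
      have hηℝ : (0:ℝ) < η := by exact_mod_cast hη
      obtain ⟨ε, hεmem, hεF⟩ := claim_small δ hδ.1 η hηℝ
      have hεr : ε ∈ Ioo (0:ℝ) r := ⟨hεmem.1, hεmem.2.trans_le (min_le_right _ _)⟩
      have hεIoc : ε ∈ Ioc (0:ℝ) r := ⟨hεr.1, hεr.2.le⟩
      have hm : ν (Ioc δ r) ≤ ν (Ioc ε r) :=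
        measure_mono (Ioc_subset_Ioc_left (hεmem.2.trans_le (min_le_left _ _)).le)
      calc ENNReal.ofReal (F r) + ENNReal.ofReal (1+ρ) * ν (Ioc δ r)
          ≤ ENNReal.ofReal (F r) + ENNReal.ofReal (1+ρ) * ENNReal.ofReal (Hreal ε) := by
            rw [← hνIoc ε hεIoc]
            exact add_le_add_right (mul_le_mul_right hm _) _
        _ = ENNReal.ofReal (F r + (1+ρ) * Hreal ε) := by
            rw [← ENNReal.ofReal_mul h1ρ.le,
              ← ENNReal.ofReal_add hFr0 (mul_nonneg h1ρ.le (hH0 ε hεIoc))]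
        _ ≤ ENNReal.ofReal (C + η) := ENNReal.ofReal_le_ofReal (by linarith [key ε hεr])
        _ ≤ ENNReal.ofReal C + η := by
            rw [ENNReal.ofReal_add hC0 hηℝ.le, ENNReal.ofReal_coe_nnreal]
    have htail : ∀ κ' : ℝ≥0∞, 0 < κ' → ∃ δ ∈ Ioo (0:ℝ) r, ν (Ioc 0 δ) < κ' := by
      intro κ' hκ'
      set v : ℕ → Set ℝ := fun n => Ioc 0 (min (r/2) (1/(n+1))) with hvdef
      have hanti : Antitone v := by
        intro m n hmn
        apply Ioc_subset_Ioc_right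
        apply min_le_min le_rfl
        apply one_div_le_one_div_of_le (by positivity)
        have : (m:ℝ) ≤ n := by exact_mod_cast hmn
        linarith
      have hiInter : ⋂ n, v n = ∅ := by
        ext s
        simp only [hvdef, mem_iInter, mem_Ioc, mem_empty_iff_false, iff_false, not_forall]
        by_contra hall
        push_neg at hall
        obtain ⟨n, hn⟩ := exists_nat_gt s⁻¹
        have h1 := hall n
        have hs0 : 0 < s := h1.1
        have h2 : s ≤ 1/(n+1) := le_trans h1.2 (min_le_right _ _)
        rw [le_div_iff₀ (by positivity)] at h2
        have h3 : s⁻¹ * s < n * s := by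
          apply mul_lt_mul_of_pos_right _ hs0
          exact lt_of_le_of_lt (le_refl _) hn
        rw [inv_mul_cancel₀ hs0.ne'] at h3
        nlinarith
      have hνfin : ν (Ioc 0 r) ≠ ⊤ := by
        rw [hνapp 0 r, ← hTdef]; exact hT
      have hfin : ν (v 0) ≠ ⊤ := by
        refine ne_top_of_le_ne_top hνfin (measure_mono ?_)
        apply Ioc_subset_Ioc_right
        exact le_trans (min_le_left _ _) (by linarith)
      have htendsto := tendsto_measure_iInter_atTop
        (fun n => measurableSet_Ioc.nullMeasurableSet) hanti ⟨0, hfin⟩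
      rw [hiInter, measure_empty] at htendsto
      obtain ⟨n, hn⟩ := (htendsto.eventually_lt_const hκ').exists
      refine ⟨min (r/2) (1/(n+1)), ⟨lt_min (by positivity) (by positivity),
        lt_of_le_of_lt (min_le_left _ _) (by linarith)⟩, hn⟩
    apply ENNReal.le_of_forall_pos_le_add
    intro η hη _
    have hfac0 : ENNReal.ofReal (1+ρ) ≠ 0 := by
      simp only [ne_eq, ENNReal.ofReal_eq_zero, not_le]
      exact h1ρ
    have hfact : ENNReal.ofReal (1+ρ) ≠ ⊤ := ENNReal.ofReal_ne_top
    set κ' : ℝ≥0∞ := (η : ℝ≥0∞) / ENNReal.ofReal (1+ρ) with hκ'def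
    have hη' : ((η : ℝ≥0∞)) ≠ 0 := by exact_mod_cast hη.ne'
    have hκ'pos : 0 < κ' := ENNReal.div_pos hη' hfact
    obtain ⟨δ, hδ, hνδ⟩ := htail κ' hκ'pos
    have hsplitT : T = ν (Ioc 0 δ) + ν (Ioc δ r) := by
      rw [hTdef, ← hνapp 0 r, ← Ioc_union_Ioc_eq_Ioc hδ.1.le hδ.2.le,
        measure_union (Ioc_disjoint_Ioc_of_le le_rfl) measurableSet_Ioc]
    calc ENNReal.ofReal (F r) + ENNReal.ofReal (1+ρ) * T
        = (ENNReal.ofReal (F r) + ENNReal.ofReal (1+ρ) * ν (Ioc δ r))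
            + ENNReal.ofReal (1+ρ) * ν (Ioc 0 δ) := by
          rw [hsplitT, mul_add]; ring
      _ ≤ ENNReal.ofReal C + ENNReal.ofReal (1+ρ) * κ' :=
          add_le_add (Sδ δ hδ) (mul_le_mul_right hνδ.le _)
      _ = ENNReal.ofReal C + η := by
          rw [hκ'def, ENNReal.mul_div_cancel hfac0 hfact]
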